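/- For every integer k ≥ 1, m_{k+1} + 4·q_{k+1}² ≤ (1 − β_k/2)·(m_k + 4·q_k²) + (18/β_k)·‖z_{k+1} − z_k‖². -/

import Mathlib

theorem piece (b Q d : ℝ) (hb0 : 0 < b) (hb1 : b ≤ 1) (hQ : 0 ≤ Q) (hd : 0 ≤ d) :
    4 * b * (1 - b) ^ 2 * (Q + 2 * d) ^ 2 ≤ 4 * b * (1 - b / 2) * Q ^ 2 + (15 + 3 * b) * d ^ 2 := by
  nlinarith [mul_nonneg (sub_nonneg.2 hb1) (sq_nonneg (3 * b * Q - 4 * d)),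
    mul_nonneg (mul_nonneg hb0.le (mul_nonneg hb0.le hb0.le)) (sq_nonneg Q),
    mul_nonneg (mul_nonneg hb0.le hb0.le) (sq_nonneg Q),
    mul_nonneg hb0.le (sq_nonneg d), mul_nonneg (mul_nonneg hb0.le hb0.le) (sq_nonneg d),
    mul_nonneg (mul_nonneg (mul_nonneg hb0.le hb0.le) hb0.le) (sq_nonneg d),
    sq_nonneg d, sq_nonneg (b * d), mul_nonneg hQ hd]

theorem key_scalar (b M Q Q' M' d : ℝ) (hb0 : 0 < b) (hb1 : b ≤ 1)
    (hM : 0 ≤ M) (hQ : 0 ≤ Q) (hd : 0 ≤ d) (hQ'0 : 0 ≤ Q')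
    (hQ' : Q' ≤ (1 - b) * (Q + 2 * d))
    (hM' : M' ≤ (1 - b) * ((1 + b / 2) * M + (1 + 2 / b) * d ^ 2) + (1 - b) ^ 2 / b * d ^ 2) :
    M' + 4 * Q' ^ 2 ≤ (1 - b / 2) * (M + 4 * Q ^ 2) + 18 / b * d ^ 2 := by
  have hb' : b ≠ 0 := ne_of_gt hb0
  have hQsq : Q' ^ 2 ≤ ((1 - b) * (Q + 2 * d)) ^ 2 := by
    have h1 : 0 ≤ (1 - b) * (Q + 2 * d) := by nlinarith
    nlinarith
  have hM'b : b * M' ≤ (1 - b) * ((b + b ^ 2 / 2) * M + (b + 2) * d ^ 2) + (1 - b) ^ 2 * d ^ 2 := by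
    have e : b * ((1 - b) * ((1 + b / 2) * M + (1 + 2 / b) * d ^ 2) + (1 - b) ^ 2 / b * d ^ 2)
        = (1 - b) * ((b + b ^ 2 / 2) * M + (b + 2) * d ^ 2) + (1 - b) ^ 2 * d ^ 2 := by
      field_simp
    calc b * M' ≤ b * ((1 - b) * ((1 + b / 2) * M + (1 + 2 / b) * d ^ 2) + (1 - b) ^ 2 / b * d ^ 2) :=
          mul_le_mul_of_nonneg_left hM' hb0.le
      _ = _ := e
  rw [← mul_le_mul_iff_right₀ hb0]
  have e2 : b * ((1 - b / 2) * (M + 4 * Q ^ 2) + 18 / b * d ^ 2)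
      = b * ((1 - b / 2) * (M + 4 * Q ^ 2)) + 18 * d ^ 2 := by field_simp
  rw [e2]
  have hp := piece b Q d hb0 hb1 hQ hd
  have hbQ : 4 * b * Q' ^ 2 ≤ 4 * b * (1 - b) ^ 2 * (Q + 2 * d) ^ 2 := by
    have := mul_le_mul_of_nonneg_left hQsq (by positivity : (0:ℝ) ≤ 4 * b)
    nlinarith [this]
  nlinarith [hM'b, hbQ, hp, mul_nonneg (mul_nonneg (mul_nonneg hb0.le hb0.le) hb0.le) hM]

theorem young_sq (b a d : ℝ) (hb0 : 0 < b) :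
    (a + d) ^ 2 ≤ (1 + b / 2) * a ^ 2 + (1 + 2 / b) * d ^ 2 := by
  have h := div_nonneg (sq_nonneg (b * a - 2 * d)) (by positivity : (0:ℝ) ≤ 2 * b)
  have e : (b * a - 2 * d) ^ 2 / (2 * b)
      = (1 + b / 2) * a ^ 2 + (1 + 2 / b) * d ^ 2 - (a + d) ^ 2 := by
    field_simp; ring
  linarith [e ▸ h]

theorem stmt_10 {E : Type*} [NormedAddCommGroup E] [NormedSpace ℝ E]
    (β : ℕ → ℝ) (hβ0 : β 0 = 1) (hβ : ∀ k, 0 < β k ∧ β k ≤ 1)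
    (z yhat : ℕ → E)
    (hyhat : ∀ t : ℕ, yhat (t + 1) = (1 - 1 / β t) • z t + (1 / β t) • z (t + 1))
    (ζ : ℕ → ℕ → ℝ)
    (hζ : ∀ t k : ℕ, t ≤ k → ζ t k = β t * ∏ i ∈ Finset.Icc (t + 1) k, (1 - β i))
    (q m : ℕ → ℝ)
    (hq : ∀ k : ℕ, q (k + 1) = ∑ t ∈ Finset.range (k + 1), ζ t k * ‖z (k + 1) - yhat (t + 1)‖)
    (hm : ∀ k : ℕ, m (k + 1) = ∑ t ∈ Finset.range (k + 1), ζ t k * ‖z (k + 1) - yhat (t + 1)‖ ^ 2) :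
    ∀ k : ℕ, 1 ≤ k →
      m (k + 1) + 4 * q (k + 1) ^ 2 ≤
        (1 - β k / 2) * (m k + 4 * q k ^ 2) + (18 / β k) * ‖z (k + 1) - z k‖ ^ 2 := by
  have hζnn : ∀ t k : ℕ, t ≤ k → 0 ≤ ζ t k := by
    intro t k htk
    rw [hζ t k htk]
    exact mul_nonneg (hβ t).1.le (Finset.prod_nonneg fun i _ => by linarith [(hβ i).2])
  have hζself : ∀ k : ℕ, ζ k k = β k := by
    intro k
    rw [hζ k k le_rfl, Finset.Icc_eq_empty (by omega), Finset.prod_empty, mul_one]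
  have hζrec : ∀ t k : ℕ, t ≤ k → ζ t (k + 1) = (1 - β (k + 1)) * ζ t k := by
    intro t k htk
    rw [hζ t k htk, hζ t (k + 1) (by omega),
      Finset.prod_Icc_succ_top (by omega : t + 1 ≤ k + 1)]
    ring
  have hζsum : ∀ k : ℕ, ∑ t ∈ Finset.range (k + 1), ζ t k = 1 := by
    intro k
    induction k with
    | zero => simp [hζself 0, hβ0]
    | succ n ih =>
      rw [Finset.sum_range_succ, hζself (n + 1)]
      have : ∑ t ∈ Finset.range (n + 1), ζ t (n + 1)
          = (1 - β (n + 1)) * ∑ t ∈ Finset.range (n + 1), ζ t n := by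
        rw [Finset.mul_sum]
        exact Finset.sum_congr rfl fun t ht =>
          hζrec t n (Nat.lt_succ_iff.mp (Finset.mem_range.mp ht))
      rw [this, ih]; ring
  intro k hk
  obtain ⟨j, rfl⟩ : ∃ j, k = j + 1 := ⟨k - 1, by omega⟩
  obtain ⟨hb0, hb1⟩ := hβ (j + 1)
  have hb' : β (j + 1) ≠ 0 := ne_of_gt hb0
  have hd0 : (0:ℝ) ≤ ‖z (j + 1 + 1) - z (j + 1)‖ := norm_nonneg _
  have hlast : ‖z (j + 1 + 1) - yhat (j + 1 + 1)‖
      = (1 / β (j + 1) - 1) * ‖z (j + 1 + 1) - z (j + 1)‖ := by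
    have hv : z (j + 1 + 1) - yhat (j + 1 + 1)
        = (1 - 1 / β (j + 1)) • (z (j + 1 + 1) - z (j + 1)) := by
      rw [hyhat (j + 1)]
      module
    rw [hv, norm_smul, Real.norm_eq_abs, abs_of_nonpos]
    · ring
    · have h1 : 1 ≤ 1 / β (j + 1) := by rw [le_div_iff₀ hb0]; linarith
      linarith
  have htri : ∀ t : ℕ, ‖z (j + 1 + 1) - yhat (t + 1)‖
      ≤ ‖z (j + 1) - yhat (t + 1)‖ + ‖z (j + 1 + 1) - z (j + 1)‖ := by
    intro t
    calc ‖z (j + 1 + 1) - yhat (t + 1)‖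
        = ‖(z (j + 1) - yhat (t + 1)) + (z (j + 1 + 1) - z (j + 1))‖ := by congr 1; abel
      _ ≤ _ := norm_add_le _ _
  have hq0 : 0 ≤ q (j + 1) := by
    rw [hq j]
    exact Finset.sum_nonneg fun t ht => mul_nonneg
      (hζnn t j (Nat.lt_succ_iff.mp (Finset.mem_range.mp ht))) (norm_nonneg _)
  have hm0 : 0 ≤ m (j + 1) := by
    rw [hm j]
    exact Finset.sum_nonneg fun t ht => mul_nonneg
      (hζnn t j (Nat.lt_succ_iff.mp (Finset.mem_range.mp ht))) (sq_nonneg _)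
  have hq0' : 0 ≤ q (j + 1 + 1) := by
    rw [hq (j + 1)]
    exact Finset.sum_nonneg fun t ht => mul_nonneg
      (hζnn t (j + 1) (Nat.lt_succ_iff.mp (Finset.mem_range.mp ht))) (norm_nonneg _)
  -- q bound
  have hqbound : q (j + 1 + 1)
      ≤ (1 - β (j + 1)) * (q (j + 1) + 2 * ‖z (j + 1 + 1) - z (j + 1)‖) := by
    rw [hq (j + 1), Finset.sum_range_succ, hζself (j + 1), hlast]
    have h1 : ∑ t ∈ Finset.range (j + 1), ζ t (j + 1) * ‖z (j + 1 + 1) - yhat (t + 1)‖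
        ≤ (1 - β (j + 1)) * (q (j + 1) + ‖z (j + 1 + 1) - z (j + 1)‖) := by
      have hle : ∀ t ∈ Finset.range (j + 1),
          ζ t (j + 1) * ‖z (j + 1 + 1) - yhat (t + 1)‖
          ≤ (1 - β (j + 1)) * (ζ t j * (‖z (j + 1) - yhat (t + 1)‖ + ‖z (j + 1 + 1) - z (j + 1)‖)) := by
        intro t ht
        have htj := Nat.lt_succ_iff.mp (Finset.mem_range.mp ht)
        rw [hζrec t j htj, mul_assoc]
        have h1b : (0:ℝ) ≤ 1 - β (j + 1) := by linarith
        exact mul_le_mul_of_nonneg_left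
          (mul_le_mul_of_nonneg_left (htri t) (hζnn t j htj)) h1b
      calc _ ≤ ∑ t ∈ Finset.range (j + 1),
            (1 - β (j + 1)) * (ζ t j * (‖z (j + 1) - yhat (t + 1)‖ + ‖z (j + 1 + 1) - z (j + 1)‖)) :=
            Finset.sum_le_sum hle
        _ = (1 - β (j + 1)) * (q (j + 1) + ‖z (j + 1 + 1) - z (j + 1)‖) := by
            rw [← Finset.mul_sum]
            congr 1
            calc ∑ t ∈ Finset.range (j + 1),
                  ζ t j * (‖z (j + 1) - yhat (t + 1)‖ + ‖z (j + 1 + 1) - z (j + 1)‖)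
                = (∑ t ∈ Finset.range (j + 1), ζ t j * ‖z (j + 1) - yhat (t + 1)‖)
                  + (∑ t ∈ Finset.range (j + 1), ζ t j) * ‖z (j + 1 + 1) - z (j + 1)‖ := by
                  rw [Finset.sum_mul, ← Finset.sum_add_distrib]
                  exact Finset.sum_congr rfl fun t _ => by ring
              _ = q (j + 1) + ‖z (j + 1 + 1) - z (j + 1)‖ := by
                  rw [hζsum j, one_mul, hq j]
    have h2 : β (j + 1) * ((1 / β (j + 1) - 1) * ‖z (j + 1 + 1) - z (j + 1)‖)
        = (1 - β (j + 1)) * ‖z (j + 1 + 1) - z (j + 1)‖ := by field_simp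
    rw [h2]; linarith
  -- m bound
  have hmbound : m (j + 1 + 1)
      ≤ (1 - β (j + 1)) * ((1 + β (j + 1) / 2) * m (j + 1)
          + (1 + 2 / β (j + 1)) * ‖z (j + 1 + 1) - z (j + 1)‖ ^ 2)
        + (1 - β (j + 1)) ^ 2 / β (j + 1) * ‖z (j + 1 + 1) - z (j + 1)‖ ^ 2 := by
    rw [hm (j + 1), Finset.sum_range_succ, hζself (j + 1), hlast]
    have h1 : ∑ t ∈ Finset.range (j + 1), ζ t (j + 1) * ‖z (j + 1 + 1) - yhat (t + 1)‖ ^ 2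
        ≤ (1 - β (j + 1)) * ((1 + β (j + 1) / 2) * m (j + 1)
            + (1 + 2 / β (j + 1)) * ‖z (j + 1 + 1) - z (j + 1)‖ ^ 2) := by
      have hle : ∀ t ∈ Finset.range (j + 1),
          ζ t (j + 1) * ‖z (j + 1 + 1) - yhat (t + 1)‖ ^ 2
          ≤ (1 - β (j + 1)) * (ζ t j * ((1 + β (j + 1) / 2) * ‖z (j + 1) - yhat (t + 1)‖ ^ 2
              + (1 + 2 / β (j + 1)) * ‖z (j + 1 + 1) - z (j + 1)‖ ^ 2)) := by
        intro t ht
        have htj := Nat.lt_succ_iff.mp (Finset.mem_range.mp ht)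
        rw [hζrec t j htj, mul_assoc]
        have h1b : (0:ℝ) ≤ 1 - β (j + 1) := by linarith
        refine mul_le_mul_of_nonneg_left (mul_le_mul_of_nonneg_left ?_ (hζnn t j htj)) h1b
        calc ‖z (j + 1 + 1) - yhat (t + 1)‖ ^ 2
            ≤ (‖z (j + 1) - yhat (t + 1)‖ + ‖z (j + 1 + 1) - z (j + 1)‖) ^ 2 :=
              pow_le_pow_left₀ (norm_nonneg _) (htri t) 2
          _ ≤ _ := young_sq (β (j + 1)) _ _ hb0
      calc _ ≤ ∑ t ∈ Finset.range (j + 1),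
            (1 - β (j + 1)) * (ζ t j * ((1 + β (j + 1) / 2) * ‖z (j + 1) - yhat (t + 1)‖ ^ 2
              + (1 + 2 / β (j + 1)) * ‖z (j + 1 + 1) - z (j + 1)‖ ^ 2)) :=
            Finset.sum_le_sum hle
        _ = (1 - β (j + 1)) * ((1 + β (j + 1) / 2) * m (j + 1)
              + (1 + 2 / β (j + 1)) * ‖z (j + 1 + 1) - z (j + 1)‖ ^ 2) := by
            rw [← Finset.mul_sum]
            congr 1
            calc ∑ t ∈ Finset.range (j + 1),
                  ζ t j * ((1 + β (j + 1) / 2) * ‖z (j + 1) - yhat (t + 1)‖ ^ 2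
                    + (1 + 2 / β (j + 1)) * ‖z (j + 1 + 1) - z (j + 1)‖ ^ 2)
                = (1 + β (j + 1) / 2) * (∑ t ∈ Finset.range (j + 1), ζ t j * ‖z (j + 1) - yhat (t + 1)‖ ^ 2)
                  + (∑ t ∈ Finset.range (j + 1), ζ t j)
                    * ((1 + 2 / β (j + 1)) * ‖z (j + 1 + 1) - z (j + 1)‖ ^ 2) := by
                  rw [Finset.mul_sum, Finset.sum_mul, ← Finset.sum_add_distrib]
                  exact Finset.sum_congr rfl fun t _ => by ring
              _ = _ := by rw [hζsum j, one_mul, hm j]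
    have h2 : β (j + 1) * (((1 / β (j + 1) - 1) * ‖z (j + 1 + 1) - z (j + 1)‖) ^ 2)
        ≤ (1 - β (j + 1)) ^ 2 / β (j + 1) * ‖z (j + 1 + 1) - z (j + 1)‖ ^ 2 := by
      have e : β (j + 1) * (((1 / β (j + 1) - 1) * ‖z (j + 1 + 1) - z (j + 1)‖) ^ 2)
          = (1 - β (j + 1)) ^ 2 / β (j + 1) * ‖z (j + 1 + 1) - z (j + 1)‖ ^ 2 := by
        field_simp
      rw [e]
    linarith
  exact key_scalar (β (j + 1)) (m (j + 1)) (q (j + 1)) (q (j + 1 + 1)) (m (j + 1 + 1))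
    ‖z (j + 1 + 1) - z (j + 1)‖ hb0 hb1 hm0 hq0 hd0 hq0' hqbound hmbound
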